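/- In the Kleinberg–Tardos rounding for Uniform Metric Labeling, for any edge (u,v) with LP values x^u, x^v ∈ Δ_q, the probability that u and v receive different labels is at most ‖x^u − x^v‖_1 (equivalently at most 2 times the total variation distance), where the algorithm repeatedly picks a uniform label i ∈ [q] and threshold ρ ∈ [0,1] and assigns label i to every unassigned vertex w with x^w_i ≥ ρ. -/

import Mathlib

open scoped Classical
open scoped ENNReal
open MeasureTheory ProbabilityTheory

lemma ktProd_apply (q : ℕ) [NeZero q] (T : Fin q → Set ℝ) (hT : ∀ i, MeasurableSet (T i)) :
    (((PMF.uniformOfFintype (Fin q)).toMeasure).prod (volume.restrict (Set.Icc (0:ℝ) 1)))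
      {p : Fin q × ℝ | p.2 ∈ T p.1}
      = ∑ i, (q : ℝ≥0∞)⁻¹ * volume.restrict (Set.Icc (0:ℝ) 1) (T i) := by
  have hmeas : MeasurableSet {p : Fin q × ℝ | p.2 ∈ T p.1} := by
    have : {p : Fin q × ℝ | p.2 ∈ T p.1} = ⋃ i, (Prod.fst ⁻¹' {i}) ∩ (Prod.snd ⁻¹' T i) := by
      ext ⟨i, ρ⟩; simp
    rw [this]
    exact MeasurableSet.iUnion fun i =>
      ((measurableSet_singleton i).preimage measurable_fst).inter ((hT i).preimage measurable_snd)
  rw [Measure.prod_apply hmeas]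
  have : ∀ i : Fin q, (Prod.mk i ⁻¹' {p : Fin q × ℝ | p.2 ∈ T p.1}) = T i := fun i => rfl
  simp_rw [this]
  rw [lintegral_fintype]
  congr 1
  ext i
  rw [PMF.toMeasure_apply_singleton _ _ (measurableSet_singleton i), PMF.uniformOfFintype_apply]
  simp [mul_comm, Fintype.card_fin]

lemma ktMeasurable_setOf (q : ℕ) (T : Fin q → Set ℝ) (hT : ∀ i, MeasurableSet (T i)) :
    MeasurableSet {p : Fin q × ℝ | p.2 ∈ T p.1} := by
  have : {p : Fin q × ℝ | p.2 ∈ T p.1} = ⋃ i, (Prod.fst ⁻¹' {i}) ∩ (Prod.snd ⁻¹' T i) := by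
    ext ⟨i, ρ⟩; simp
  rw [this]
  exact MeasurableSet.iUnion fun i =>
    ((measurableSet_singleton i).preimage measurable_fst).inter ((hT i).preimage measurable_snd)

/-- The label that the Kleinberg–Tardos process `ω` (an infinite sequence of
rounds `(i_n, ρ_n)`) assigns to a vertex with LP values `x`: the label `i_n`
of the first round `n` with `x_{i_n} ≥ ρ_n`, if such a round exists. -/
noncomputable def ktLabel (q : ℕ) (x : Fin q → ℝ) (ω : ℕ → Fin q × ℝ) :
    Option (Fin q) :=
  if h : ∃ n, (ω n).2 ≤ x (ω n).1 then some (ω (Nat.find h)).1 else none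

/-- Kleinberg–Tardos rounding: if the rounds are i.i.d. with `i_n` uniform on
`[q]` and `ρ_n` uniform on `[0,1]`, then for two vertices with LP values
`xu, xv ∈ Δ_q` the probability of receiving different labels is at most
`‖xu − xv‖₁`. -/
theorem stmt13 (q : ℕ) [NeZero q] (xu xv : Fin q → ℝ)
    (hxu0 : ∀ i, 0 ≤ xu i) (hxu1 : ∑ i, xu i = 1)
    (hxv0 : ∀ i, 0 ≤ xv i) (hxv1 : ∑ i, xv i = 1)
    (μ : Measure (ℕ → Fin q × ℝ)) [IsProbabilityMeasure μ]
    (hindep : iIndepFun (fun n (ω : ℕ → Fin q × ℝ) => ω n) μ)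
    (hdist : ∀ n, μ.map (fun ω => ω n) =
      ((PMF.uniformOfFintype (Fin q)).toMeasure).prod
        (volume.restrict (Set.Icc (0 : ℝ) 1))) :
    (μ {ω | ktLabel q xu ω ≠ ktLabel q xv ω}).toReal ≤ ∑ i, |xu i - xv i| := by
  set ν := volume.restrict (Set.Icc (0:ℝ) 1) with hν
  set PV := ((PMF.uniformOfFintype (Fin q)).toMeasure).prod ν with hPV
  -- coordinates bounds
  have hxu1' : ∀ i, xu i ≤ 1 := fun i => hxu1 ▸ Finset.single_le_sum (fun j _ => hxu0 j) (Finset.mem_univ i)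
  have hxv1' : ∀ i, xv i ≤ 1 := fun i => hxv1 ▸ Finset.single_le_sum (fun j _ => hxv0 j) (Finset.mem_univ i)
  -- probability measure instances
  haveI : IsProbabilityMeasure ν := by
    constructor
    rw [hν, Measure.restrict_apply_univ, Real.volume_Icc]
    norm_num
  haveI : IsProbabilityMeasure PV := by rw [hPV]; infer_instance
  -- the two events per round
  set BH : Set (Fin q × ℝ) := {p | p.2 ∈ Set.Iic (max (xu p.1) (xv p.1))} with hBHdef
  set BS : Set (Fin q × ℝ) :=
    {p | p.2 ∈ Set.Ioc (min (xu p.1) (xv p.1)) (max (xu p.1) (xv p.1))} with hBSdef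
  have hBHm : MeasurableSet BH := by
    rw [hBHdef]
    exact ktMeasurable_setOf q (fun i => Set.Iic (max (xu i) (xv i)))
      (fun i => measurableSet_Iic)
  have hBSm : MeasurableSet BS := by
    rw [hBSdef]
    exact ktMeasurable_setOf q (fun i => Set.Ioc (min (xu i) (xv i)) (max (xu i) (xv i)))
      (fun i => measurableSet_Ioc)
  -- measure of the separation event
  have hνIoc : ∀ i : Fin q, ν (Set.Ioc (min (xu i) (xv i)) (max (xu i) (xv i)))
      = ENNReal.ofReal (|xu i - xv i|) := by
    intro i
    rw [hν, Measure.restrict_apply measurableSet_Ioc]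
    have hsub : Set.Ioc (min (xu i) (xv i)) (max (xu i) (xv i)) ⊆ Set.Icc (0:ℝ) 1 := by
      intro x hx
      exact ⟨le_trans (le_min (hxu0 i) (hxv0 i)) hx.1.le,
        le_trans hx.2 (max_le (hxu1' i) (hxv1' i))⟩
    rw [Set.inter_eq_self_of_subset_left hsub, Real.volume_Ioc, max_sub_min_eq_abs, abs_sub_comm]
  have hpS : PV BS = (q : ℝ≥0∞)⁻¹ * ENNReal.ofReal (∑ i, |xu i - xv i|) := by
    rw [hPV, hBSdef, ktProd_apply q (fun i => Set.Ioc (min (xu i) (xv i)) (max (xu i) (xv i)))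
      (fun i => measurableSet_Ioc)]
    simp_rw [← hν, hνIoc]
    rw [← Finset.mul_sum, ENNReal.ofReal_sum_of_nonneg (fun i _ => abs_nonneg _)]
  -- measure of the hitting event is at least q⁻¹
  have hpH : (q : ℝ≥0∞)⁻¹ ≤ PV BH := by
    have h1 : PV BH = ∑ i, (q : ℝ≥0∞)⁻¹ * ν (Set.Iic (max (xu i) (xv i))) := by
      rw [hPV, hBHdef, ktProd_apply q (fun i => Set.Iic (max (xu i) (xv i)))
        (fun i => measurableSet_Iic)]
    have h2 : ∀ i : Fin q, ENNReal.ofReal (xu i) ≤ ν (Set.Iic (max (xu i) (xv i))) := by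
      intro i
      rw [hν, Measure.restrict_apply measurableSet_Iic]
      have : Set.Icc (0:ℝ) (xu i) ⊆ Set.Iic (max (xu i) (xv i)) ∩ Set.Icc 0 1 := by
        intro x hx
        exact ⟨le_trans hx.2 (le_max_left _ _), hx.1, le_trans hx.2 (hxu1' i)⟩
      calc ENNReal.ofReal (xu i) = volume (Set.Icc (0:ℝ) (xu i)) := by
            rw [Real.volume_Icc, sub_zero]
        _ ≤ _ := measure_mono this
    calc (q : ℝ≥0∞)⁻¹ = (q : ℝ≥0∞)⁻¹ * ENNReal.ofReal (∑ i, xu i) := by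
          rw [hxu1]; simp
      _ = ∑ i, (q : ℝ≥0∞)⁻¹ * ENNReal.ofReal (xu i) := by
          rw [ENNReal.ofReal_sum_of_nonneg (fun i _ => hxu0 i), Finset.mul_sum]
      _ ≤ _ := by
          rw [h1]
          exact Finset.sum_le_sum fun i _ => mul_le_mul_right (h2 i) _
  -- complement bound
  have hpHc : PV BHᶜ ≤ 1 - (q : ℝ≥0∞)⁻¹ := by
    rw [measure_compl hBHm (measure_ne_top _ _), measure_univ]
    exact tsub_le_tsub_left hpH 1
  -- coordinate event measures
  have hcoord : ∀ (n : ℕ) (B : Set (Fin q × ℝ)), MeasurableSet B →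
      μ ((fun ω => ω n) ⁻¹' B) = PV B := by
    intro n B hB
    rw [← hdist n, Measure.map_apply (measurable_pi_apply n) hB]
  -- family of events
  set F : ℕ → ℕ → Set (ℕ → Fin q × ℝ) :=
    fun n k => (fun ω => ω k) ⁻¹' (if k = n then BS else BHᶜ) with hF
  have hFmeas : ∀ (n k : ℕ), MeasurableSet (if k = n then BS else BHᶜ) := by
    intro n k; split_ifs; exacts [hBSm, hBHm.compl]
  have hEn : ∀ n, μ (⋂ k ∈ Finset.range (n+1), F n k)
      = ∏ k ∈ Finset.range (n+1), μ (F n k) := by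
    intro n
    exact hindep.meas_biInter (fun k _ => ⟨_, hFmeas n k, rfl⟩)
  have hEnBound : ∀ n, μ (⋂ k ∈ Finset.range (n+1), F n k)
      ≤ (1 - (q : ℝ≥0∞)⁻¹) ^ n * ((q : ℝ≥0∞)⁻¹ * ENNReal.ofReal (∑ i, |xu i - xv i|)) := by
    intro n
    rw [hEn n, Finset.prod_range_succ]
    have h1 : ∀ k ∈ Finset.range n, μ (F n k) ≤ (1 - (q : ℝ≥0∞)⁻¹) := by
      intro k hk
      have hkn : k ≠ n := Nat.ne_of_lt (Finset.mem_range.1 hk)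
      have : F n k = (fun ω : ℕ → Fin q × ℝ => ω k) ⁻¹' BHᶜ := by rw [hF]; simp [hkn]
      rw [this, hcoord k _ hBHm.compl]
      exact hpHc
    have h2 : μ (F n n) = (q : ℝ≥0∞)⁻¹ * ENNReal.ofReal (∑ i, |xu i - xv i|) := by
      have : F n n = (fun ω : ℕ → Fin q × ℝ => ω n) ⁻¹' BS := by rw [hF]; simp
      rw [this, hcoord n _ hBSm, hpS]
    rw [h2]
    refine mul_le_mul' ?_ le_rfl
    calc ∏ k ∈ Finset.range n, μ (F n k) ≤ ∏ k ∈ Finset.range n, (1 - (q : ℝ≥0∞)⁻¹) :=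
          Finset.prod_le_prod' h1
      _ = (1 - (q : ℝ≥0∞)⁻¹) ^ n := by rw [Finset.prod_const, Finset.card_range]
  -- the deterministic inclusion
  have hincl : {ω | ktLabel q xu ω ≠ ktLabel q xv ω} ⊆ ⋃ n, ⋂ k ∈ Finset.range (n+1), F n k := by
    intro ω hω
    simp only [Set.mem_setOf_eq] at hω
    by_cases hH : ∃ n, (ω n).2 ≤ max (xu (ω n).1) (xv (ω n).1)
    · refine Set.mem_iUnion.2 ⟨Nat.find hH, Set.mem_iInter₂.2 fun k hk => ?_⟩
      rcases Nat.lt_succ_iff_lt_or_eq.1 (Finset.mem_range.1 hk) with hlt | heq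
      · have hne : ω k ∉ BH := Nat.find_min hH hlt
        have : F (Nat.find hH) k = (fun ω : ℕ → Fin q × ℝ => ω k) ⁻¹' BHᶜ := by
          simp only [hF]; rw [if_neg (Nat.ne_of_lt hlt)]
        rw [this]
        exact hne
      · subst heq
        have hmem : ω (Nat.find hH) ∈ BS := by
          refine ⟨?_, Nat.find_spec hH⟩
          by_contra hmin
          push_neg at hmin
          have hboth := le_min_iff.1 hmin
          have hu : ∃ n, (ω n).2 ≤ xu (ω n).1 := ⟨Nat.find hH, hboth.1⟩
          have hv : ∃ n, (ω n).2 ≤ xv (ω n).1 := ⟨Nat.find hH, hboth.2⟩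
          have hfu : Nat.find hu = Nat.find hH := le_antisymm (Nat.find_le hboth.1)
            (Nat.find_min' hH (le_trans (Nat.find_spec hu) (le_max_left _ _)))
          have hfv : Nat.find hv = Nat.find hH := le_antisymm (Nat.find_le hboth.2)
            (Nat.find_min' hH (le_trans (Nat.find_spec hv) (le_max_right _ _)))
          apply hω
          unfold ktLabel
          rw [dif_pos hu, dif_pos hv, hfu, hfv]
        have : F (Nat.find hH) (Nat.find hH)
            = (fun ω : ℕ → Fin q × ℝ => ω (Nat.find hH)) ⁻¹' BS := by
          simp [hF]
        rw [this]
        exact hmem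
    · exfalso
      apply hω
      have hu : ¬ ∃ n, (ω n).2 ≤ xu (ω n).1 :=
        fun ⟨n, hn⟩ => hH ⟨n, le_trans hn (le_max_left _ _)⟩
      have hv : ¬ ∃ n, (ω n).2 ≤ xv (ω n).1 :=
        fun ⟨n, hn⟩ => hH ⟨n, le_trans hn (le_max_right _ _)⟩
      unfold ktLabel
      rw [dif_neg hu, dif_neg hv]
  -- put it together
  have hq1 : (q : ℝ≥0∞)⁻¹ ≤ 1 := ENNReal.inv_le_one.2 (Nat.one_le_cast.2 (Nat.pos_of_ne_zero (NeZero.ne q)))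
  have hbound : μ {ω | ktLabel q xu ω ≠ ktLabel q xv ω}
      ≤ ENNReal.ofReal (∑ i, |xu i - xv i|) := by
    calc μ {ω | ktLabel q xu ω ≠ ktLabel q xv ω}
        ≤ μ (⋃ n, ⋂ k ∈ Finset.range (n+1), F n k) := measure_mono hincl
      _ ≤ ∑' n, μ (⋂ k ∈ Finset.range (n+1), F n k) := measure_iUnion_le _
      _ ≤ ∑' n, (1 - (q : ℝ≥0∞)⁻¹) ^ n *
            ((q : ℝ≥0∞)⁻¹ * ENNReal.ofReal (∑ i, |xu i - xv i|)) :=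
          ENNReal.tsum_le_tsum hEnBound
      _ = (∑' n, (1 - (q : ℝ≥0∞)⁻¹) ^ n) *
            ((q : ℝ≥0∞)⁻¹ * ENNReal.ofReal (∑ i, |xu i - xv i|)) := ENNReal.tsum_mul_right
      _ = ENNReal.ofReal (∑ i, |xu i - xv i|) := by
          rw [ENNReal.tsum_geometric, ENNReal.sub_sub_cancel ENNReal.one_ne_top hq1,
            inv_inv, ← mul_assoc, ENNReal.mul_inv_cancel
              (Nat.cast_ne_zero.2 (NeZero.ne q)) (ENNReal.natCast_ne_top q), one_mul]
  calc (μ {ω | ktLabel q xu ω ≠ ktLabel q xv ω}).toReal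
      ≤ (ENNReal.ofReal (∑ i, |xu i - xv i|)).toReal :=
        ENNReal.toReal_mono ENNReal.ofReal_ne_top hbound
    _ = ∑ i, |xu i - xv i| :=
        ENNReal.toReal_ofReal (Finset.sum_nonneg fun i _ => abs_nonneg _)
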